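/- With W, J, K, G as above and c² + d² ≠ 0, for every r ∈ [0,1]: ∫₀^r e^{2c(r−s)} J(s) ds = (1/(c² + d²))·( ∫₀^r e^{2c(r−s)} dW(s) − (c·J(r) + d·K(r)) ) almost surely. -/

import Mathlib

open Filter MeasureTheory intervalIntegral
open Topology

/-- Pathwise Itô integral `∫₀^r f dW` along the path `w`, defined as the limit of
left-endpoint Riemann–Stieltjes sums over uniform partitions of `[0, r]`. -/
noncomputable def itoInt (f w : ℝ → ℝ) (r : ℝ) : ℝ :=
  limUnder atTop (fun n : ℕ => ∑ k ∈ Finset.range n,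
    f ((k : ℝ) * r / n) * (w (((k : ℝ) + 1) * r / n) - w ((k : ℝ) * r / n)))

/-- `J(r) = (1/d)·∫₀^r e^{c(r−s)} sin(d(r−s)) dW(s)`. -/
noncomputable def Jp (c d : ℝ) (w : ℝ → ℝ) (r : ℝ) : ℝ :=
  (1 / d) * itoInt (fun s => Real.exp (c * (r - s)) * Real.sin (d * (r - s))) w r

/-- `K(r) = (1/d)·∫₀^r e^{c(r−s)} cos(d(r−s)) dW(s)`. -/
noncomputable def Kp (c d : ℝ) (w : ℝ → ℝ) (r : ℝ) : ℝ :=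
  (1 / d) * itoInt (fun s => Real.exp (c * (r - s)) * Real.cos (d * (r - s))) w r

/-- `G(r) = c·J(r) + d·K(r)`. -/
noncomputable def Gp (c d : ℝ) (w : ℝ → ℝ) (r : ℝ) : ℝ :=
  c * Jp c d w r + d * Kp c d w r

lemma itoInt_eq (f f' w : ℝ → ℝ) {r : ℝ} (hr : 0 ≤ r)
    (hf : ∀ t, HasDerivAt f (f' t) t) (hf' : Continuous f')
    (hw : Continuous w) (hw0 : w 0 = 0) :
    itoInt f w r = f r * w r - ∫ t in (0:ℝ)..r, f' t * w t := by
  set I := ∫ t in (0:ℝ)..r, f' t * w t with hI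
  have hT : Tendsto (fun n : ℕ => ∑ k ∈ Finset.range n,
      (f (((k:ℝ)+1)*r/n) - f ((k:ℝ)*r/n)) * w (((k:ℝ)+1)*r/n)) atTop (𝓝 I) := by
    rw [Metric.tendsto_atTop]
    intro ε hε
    obtain ⟨M, hM⟩ := (isCompact_Icc (a := (0:ℝ)) (b := r)).exists_bound_of_continuousOn
      hf'.continuousOn
    set C := max M 0 + 1 with hC
    have hC0 : 0 < C := by positivity
    have hMC : ∀ t ∈ Set.Icc (0:ℝ) r, |f' t| ≤ C := by
      intro t ht
      have := hM t ht
      rw [Real.norm_eq_abs] at this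
      have h2 : M ≤ C := by simp only [hC]; linarith [le_max_left M 0]
      linarith
    set ε' := ε / (C * (r+1)) with hε'
    have hε'0 : 0 < ε' := by positivity
    have huc := (isCompact_Icc (a := (0:ℝ)) (b := r)).uniformContinuousOn_of_continuous
      hw.continuousOn
    rw [Metric.uniformContinuousOn_iff] at huc
    obtain ⟨δ, hδ0, hδ⟩ := huc ε' hε'0
    obtain ⟨N, hN⟩ := exists_nat_gt (r / δ)
    refine ⟨max N 1, fun n hn => ?_⟩
    have hn1 : 1 ≤ n := le_trans (le_max_right N 1) hn
    have hnN : (N:ℝ) ≤ (n:ℝ) := Nat.cast_le.mpr (le_trans (le_max_left N 1) hn)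
    have hn0 : (0:ℝ) < (n:ℝ) := by exact_mod_cast hn1
    have hn0' : (n:ℝ) ≠ 0 := ne_of_gt hn0
    have hrn : r / n < δ := by
      rw [div_lt_iff₀ hn0]
      rw [div_lt_iff₀ hδ0] at hN
      nlinarith
    set s : ℕ → ℝ := fun k => (k:ℝ) * r / n with hs
    have hs_mono : ∀ k : ℕ, s k ≤ s (k+1) := by
      intro k
      simp only [hs]
      gcongr
      · push_cast; linarith
    have hs_nonneg : ∀ k : ℕ, 0 ≤ s k := by
      intro k; simp only [hs]; positivity
    have hs_le : ∀ k : ℕ, k ≤ n → s k ≤ r := by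
      intro k hk
      simp only [hs]
      rw [div_le_iff₀ hn0]
      have : (k:ℝ) ≤ (n:ℝ) := Nat.cast_le.mpr hk
      nlinarith
    have hs_diff : ∀ k : ℕ, s (k+1) - s k = r / n := by
      intro k; simp only [hs]; push_cast; field_simp; ring
    have hs0 : s 0 = 0 := by simp [hs]
    have hsn : s n = r := by simp only [hs]; field_simp
    have hsplit : I = ∑ k ∈ Finset.range n, ∫ t in s k..s (k+1), f' t * w t := by
      rw [intervalIntegral.sum_integral_adjacent_intervals
        (fun k _ => (show Continuous (fun t => f' t * w t) from hf'.mul hw).intervalIntegrable _ _), hs0, hsn]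
    have key : ∀ k ∈ Finset.range n,
        |(f (s (k+1)) - f (s k)) * w (s (k+1)) - ∫ t in s k..s (k+1), f' t * w t|
          ≤ C * ε' * (r / n) := by
      intro k hk
      have hk' : k < n := Finset.mem_range.mp hk
      have h1 : (f (s (k+1)) - f (s k)) * w (s (k+1)) - ∫ t in s k..s (k+1), f' t * w t
          = ∫ t in s k..s (k+1), (f' t * w (s (k+1)) - f' t * w t) := by
        rw [intervalIntegral.integral_sub ((show Continuous (fun t => f' t * w (s (k+1))) from hf'.mul continuous_const).intervalIntegrable _ _)
          ((show Continuous (fun t => f' t * w t) from hf'.mul hw).intervalIntegrable _ _)]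
        congr 1
        rw [intervalIntegral.integral_mul_const,
          intervalIntegral.integral_eq_sub_of_hasDerivAt (fun x _ => hf x)
            (hf'.intervalIntegrable _ _)]
      rw [h1]
      have hb : ∀ t ∈ Set.uIoc (s k) (s (k+1)),
          ‖f' t * w (s (k+1)) - f' t * w t‖ ≤ C * ε' := by
        intro t ht
        rw [Set.uIoc_of_le (hs_mono k)] at ht
        have ht0 : 0 ≤ t := le_trans (hs_nonneg k) ht.1.le
        have htr : t ≤ r := le_trans ht.2 (hs_le (k+1) hk')
        have hclose : dist (s (k+1)) t < δ := by
          rw [Real.dist_eq, abs_of_nonneg (by linarith [ht.2] : (0:ℝ) ≤ s (k+1) - t)]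
          have : s (k+1) - t ≤ r / n := by
            have := hs_diff k
            linarith [ht.1]
          linarith
        have hwc := hδ (s (k+1)) ⟨hs_nonneg (k+1), hs_le (k+1) hk'⟩ t ⟨ht0, htr⟩ hclose
        rw [Real.dist_eq] at hwc
        rw [← mul_sub, Real.norm_eq_abs, abs_mul]
        exact mul_le_mul (hMC t ⟨ht0, htr⟩) hwc.le (abs_nonneg _) hC0.le
      have := intervalIntegral.norm_integral_le_of_norm_le_const hb
      rw [Real.norm_eq_abs] at this
      calc |∫ t in s k..s (k+1), (f' t * w (s (k+1)) - f' t * w t)|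
          ≤ C * ε' * |s (k+1) - s k| := this
        _ = C * ε' * (r / n) := by
            rw [hs_diff k, abs_of_nonneg (by positivity : (0:ℝ) ≤ r / n)]
    have hdist : |(∑ k ∈ Finset.range n, (f (s (k+1)) - f (s k)) * w (s (k+1))) - I| < ε := by
      rw [hsplit, ← Finset.sum_sub_distrib]
      calc |∑ k ∈ Finset.range n, ((f (s (k+1)) - f (s k)) * w (s (k+1))
              - ∫ t in s k..s (k+1), f' t * w t)|
          ≤ ∑ k ∈ Finset.range n, |(f (s (k+1)) - f (s k)) * w (s (k+1))
              - ∫ t in s k..s (k+1), f' t * w t| := Finset.abs_sum_le_sum_abs _ _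
        _ ≤ ∑ _k ∈ Finset.range n, C * ε' * (r / n) := Finset.sum_le_sum key
        _ = C * ε' * r := by
            rw [Finset.sum_const, Finset.card_range, nsmul_eq_mul]
            field_simp
        _ = r / (r + 1) * ε := by rw [hε']; field_simp
        _ < ε := by
            rw [div_mul_eq_mul_div, div_lt_iff₀ (by linarith : (0:ℝ) < r + 1)]
            nlinarith
    simpa only [Real.dist_eq, hs, Nat.cast_add, Nat.cast_one] using hdist
  have hmain : Tendsto (fun n : ℕ => ∑ k ∈ Finset.range n,
      f ((k : ℝ) * r / n) * (w (((k : ℝ) + 1) * r / n) - w ((k : ℝ) * r / n))) atTop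
      (𝓝 (f r * w r - I)) := by
    have heq : ∀ᶠ n : ℕ in atTop, (∑ k ∈ Finset.range n,
        f ((k : ℝ) * r / n) * (w (((k : ℝ) + 1) * r / n) - w ((k : ℝ) * r / n)))
        = f r * w r - ∑ k ∈ Finset.range n,
            (f (((k:ℝ)+1)*r/n) - f ((k:ℝ)*r/n)) * w (((k:ℝ)+1)*r/n) := by
      filter_upwards [eventually_ge_atTop 1] with n hn1
      have hn0' : (n:ℝ) ≠ 0 := by
        have : (0:ℝ) < (n:ℝ) := by exact_mod_cast hn1
        exact ne_of_gt this
      have htel := Finset.sum_range_sub (fun k : ℕ => f ((k:ℝ)*r/n) * w ((k:ℝ)*r/n)) n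
      have hterm : ∀ k ∈ Finset.range n,
          f ((k : ℝ) * r / n) * (w (((k : ℝ) + 1) * r / n) - w ((k : ℝ) * r / n))
          = (f (((k:ℝ)+1)*r/n) * w (((k:ℝ)+1)*r/n) - f ((k:ℝ)*r/n) * w ((k:ℝ)*r/n))
            - (f (((k:ℝ)+1)*r/n) - f ((k:ℝ)*r/n)) * w (((k:ℝ)+1)*r/n) := by
        intro k _; ring
      rw [Finset.sum_congr rfl hterm, Finset.sum_sub_distrib]
      have hcast : ∀ k : ℕ, ((k+1 : ℕ):ℝ) = (k:ℝ)+1 := by intro k; push_cast; ring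
      simp only [hcast] at htel
      rw [htel]
      have h1 : (n:ℝ)*r/n = r := by field_simp
      have h2 : ((0:ℕ):ℝ)*r/n = 0 := by simp
      rw [h1, h2, hw0]
      ring
    rw [tendsto_congr' heq]
    exact tendsto_const_nhds.sub hT
  exact hmain.limUnder_eq

noncomputable def Pe (c d : ℝ) (w : ℝ → ℝ) (r : ℝ) : ℝ :=
  ∫ u in (0:ℝ)..r, Real.exp (-(c*u)) * Real.cos (d*u) * w u

noncomputable def Qe (c d : ℝ) (w : ℝ → ℝ) (r : ℝ) : ℝ :=
  ∫ u in (0:ℝ)..r, Real.exp (-(c*u)) * Real.sin (d*u) * w u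

noncomputable def Re (c : ℝ) (w : ℝ → ℝ) (r : ℝ) : ℝ :=
  ∫ u in (0:ℝ)..r, Real.exp (-(2*c*u)) * w u

lemma hasDerivAt_primitive {g : ℝ → ℝ} (hg : Continuous g) (x : ℝ) :
    HasDerivAt (fun r => ∫ s in (0:ℝ)..r, g s) (g x) x :=
  intervalIntegral.integral_hasDerivAt_right (hg.intervalIntegrable _ _)
    (hg.stronglyMeasurableAtFilter _ _) hg.continuousAt

lemma contPe (c d : ℝ) {w : ℝ → ℝ} (hw : Continuous w) :
    Continuous (fun u => Real.exp (-(c*u)) * Real.cos (d*u) * w u) := by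
  exact ((Real.continuous_exp.comp (continuous_const.mul continuous_id).neg).mul
    (Real.continuous_cos.comp (continuous_const.mul continuous_id))).mul hw

lemma contQe (c d : ℝ) {w : ℝ → ℝ} (hw : Continuous w) :
    Continuous (fun u => Real.exp (-(c*u)) * Real.sin (d*u) * w u) := by
  exact ((Real.continuous_exp.comp (continuous_const.mul continuous_id).neg).mul
    (Real.continuous_sin.comp (continuous_const.mul continuous_id))).mul hw

lemma contRe (c : ℝ) {w : ℝ → ℝ} (hw : Continuous w) :
    Continuous (fun u => Real.exp (-(2*c*u)) * w u) := by
  exact (Real.continuous_exp.comp (continuous_const.mul continuous_id).neg).mul hw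

lemma hasDerivAt_Pe (c d : ℝ) {w : ℝ → ℝ} (hw : Continuous w) (x : ℝ) :
    HasDerivAt (Pe c d w) (Real.exp (-(c*x)) * Real.cos (d*x) * w x) x :=
  hasDerivAt_primitive (contPe c d hw) x

lemma hasDerivAt_Qe (c d : ℝ) {w : ℝ → ℝ} (hw : Continuous w) (x : ℝ) :
    HasDerivAt (Qe c d w) (Real.exp (-(c*x)) * Real.sin (d*x) * w x) x :=
  hasDerivAt_primitive (contQe c d hw) x

lemma hasDerivAt_Re (c : ℝ) {w : ℝ → ℝ} (hw : Continuous w) (x : ℝ) :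
    HasDerivAt (Re c w) (Real.exp (-(2*c*x)) * w x) x :=
  hasDerivAt_primitive (contRe c hw) x

noncomputable def Jt (c d : ℝ) (w : ℝ → ℝ) (r : ℝ) : ℝ :=
  (Real.exp (c*r) / d) * ((c * Real.sin (d*r) + d * Real.cos (d*r)) * Pe c d w r
    + (d * Real.sin (d*r) - c * Real.cos (d*r)) * Qe c d w r)

lemma hd_lin (a r : ℝ) (t : ℝ) : HasDerivAt (fun s : ℝ => a*(r-s)) (-a) t := by
  simpa using ((hasDerivAt_id t).const_sub r).const_mul a

lemma Jp_eq (c d : ℝ) {w : ℝ → ℝ} (hw : Continuous w) (hw0 : w 0 = 0) {r : ℝ} (hr : 0 ≤ r) :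
    Jp c d w r = Jt c d w r := by
  have hderiv : ∀ t, HasDerivAt (fun s => Real.exp (c * (r - s)) * Real.sin (d * (r - s)))
      (Real.exp (c*(r-t)) * (-(c * Real.sin (d*(r-t))) - d * Real.cos (d*(r-t)))) t := by
    intro t
    have h2 := (hd_lin c r t).exp
    have h4 := (hd_lin d r t).sin
    have := h2.mul h4
    exact this.congr_deriv (by ring)
  have hf'c : Continuous (fun t =>
      Real.exp (c*(r-t)) * (-(c * Real.sin (d*(r-t))) - d * Real.cos (d*(r-t)))) := by
    have hlin : Continuous (fun t : ℝ => c*(r-t)) := by fun_prop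
    have hlin2 : Continuous (fun t : ℝ => d*(r-t)) := by fun_prop
    exact (Real.continuous_exp.comp hlin).mul
      ((continuous_const.mul (Real.continuous_sin.comp hlin2)).neg.sub
        (continuous_const.mul (Real.continuous_cos.comp hlin2)))
  rw [Jp, itoInt_eq _ _ w hr hderiv hf'c hw hw0]
  have hzero : Real.exp (c * (r - r)) * Real.sin (d * (r - r)) = 0 := by
    simp
  rw [hzero]
  have hptw : Set.EqOn
      (fun t => Real.exp (c*(r-t)) * (-(c * Real.sin (d*(r-t))) - d * Real.cos (d*(r-t))) * w t)
      (fun t => -((Real.exp (c*r) * (c * Real.sin (d*r) + d * Real.cos (d*r)))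
          * (Real.exp (-(c*t)) * Real.cos (d*t) * w t)
        + (Real.exp (c*r) * (d * Real.sin (d*r) - c * Real.cos (d*r)))
          * (Real.exp (-(c*t)) * Real.sin (d*t) * w t))) (Set.uIcc 0 r) := by
    intro t _
    simp only
    have e1 : c*(r-t) = c*r + -(c*t) := by ring
    have e2 : d*(r-t) = d*r - d*t := by ring
    rw [e1, e2, Real.exp_add, Real.sin_sub, Real.cos_sub]
    ring
  rw [intervalIntegral.integral_congr hptw, intervalIntegral.integral_neg,
    intervalIntegral.integral_add ((show Continuous (fun t => _ * (Real.exp (-(c*t)) * Real.cos (d*t) * w t)) from continuous_const.mul (contPe c d hw)).intervalIntegrable _ _)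
      ((show Continuous (fun t => _ * (Real.exp (-(c*t)) * Real.sin (d*t) * w t)) from continuous_const.mul (contQe c d hw)).intervalIntegrable _ _),
    intervalIntegral.integral_const_mul, intervalIntegral.integral_const_mul]
  show (1/d) * (0 * w r - -(_ * Pe c d w r + _ * Qe c d w r)) = Jt c d w r
  rw [Jt]
  ring

lemma Kp_eq (c d : ℝ) {w : ℝ → ℝ} (hw : Continuous w) (hw0 : w 0 = 0) {r : ℝ} (hr : 0 ≤ r) :
    Kp c d w r = (1/d) * (w r + Real.exp (c*r) *
      ((c * Real.cos (d*r) - d * Real.sin (d*r)) * Pe c d w r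
        + (c * Real.sin (d*r) + d * Real.cos (d*r)) * Qe c d w r)) := by
  have hderiv : ∀ t, HasDerivAt (fun s => Real.exp (c * (r - s)) * Real.cos (d * (r - s)))
      (Real.exp (c*(r-t)) * (-(c * Real.cos (d*(r-t))) + d * Real.sin (d*(r-t)))) t := by
    intro t
    have h2 := (hd_lin c r t).exp
    have h4 := (hd_lin d r t).cos
    have := h2.mul h4
    exact this.congr_deriv (by ring)
  have hf'c : Continuous (fun t =>
      Real.exp (c*(r-t)) * (-(c * Real.cos (d*(r-t))) + d * Real.sin (d*(r-t)))) := by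
    have hlin : Continuous (fun t : ℝ => c*(r-t)) := by fun_prop
    have hlin2 : Continuous (fun t : ℝ => d*(r-t)) := by fun_prop
    exact (Real.continuous_exp.comp hlin).mul
      ((continuous_const.mul (Real.continuous_cos.comp hlin2)).neg.add
        (continuous_const.mul (Real.continuous_sin.comp hlin2)))
  rw [Kp, itoInt_eq _ _ w hr hderiv hf'c hw hw0]
  have hone : Real.exp (c * (r - r)) * Real.cos (d * (r - r)) = 1 := by
    simp
  rw [hone]
  have hptw : Set.EqOn
      (fun t => Real.exp (c*(r-t)) * (-(c * Real.cos (d*(r-t))) + d * Real.sin (d*(r-t))) * w t)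
      (fun t => -((Real.exp (c*r) * (c * Real.cos (d*r) - d * Real.sin (d*r)))
          * (Real.exp (-(c*t)) * Real.cos (d*t) * w t)
        + (Real.exp (c*r) * (c * Real.sin (d*r) + d * Real.cos (d*r)))
          * (Real.exp (-(c*t)) * Real.sin (d*t) * w t))) (Set.uIcc 0 r) := by
    intro t _
    simp only
    have e1 : c*(r-t) = c*r + -(c*t) := by ring
    have e2 : d*(r-t) = d*r - d*t := by ring
    rw [e1, e2, Real.exp_add, Real.sin_sub, Real.cos_sub]
    ring
  rw [intervalIntegral.integral_congr hptw, intervalIntegral.integral_neg,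
    intervalIntegral.integral_add ((show Continuous (fun t => _ * (Real.exp (-(c*t)) * Real.cos (d*t) * w t)) from continuous_const.mul (contPe c d hw)).intervalIntegrable _ _)
      ((show Continuous (fun t => _ * (Real.exp (-(c*t)) * Real.sin (d*t) * w t)) from continuous_const.mul (contQe c d hw)).intervalIntegrable _ _),
    intervalIntegral.integral_const_mul, intervalIntegral.integral_const_mul]
  show (1/d) * (1 * w r - -(_ * Pe c d w r + _ * Qe c d w r)) = _
  ring

lemma itoExp_eq (c : ℝ) {w : ℝ → ℝ} (hw : Continuous w) (hw0 : w 0 = 0) {r : ℝ} (hr : 0 ≤ r) :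
    itoInt (fun s => Real.exp (2*c*(r-s))) w r
      = w r + (2*c*Real.exp (2*c*r)) * Re c w r := by
  have hderiv : ∀ t, HasDerivAt (fun s => Real.exp (2*c*(r-s)))
      (Real.exp (2*c*(r-t)) * (-(2*c))) t := fun t => (hd_lin (2*c) r t).exp
  have hf'c : Continuous (fun t => Real.exp (2*c*(r-t)) * (-(2*c))) := by fun_prop
  rw [itoInt_eq _ _ w hr hderiv hf'c hw hw0]
  have hone : Real.exp (2*c*(r-r)) = 1 := by simp
  rw [hone]
  have hptw : Set.EqOn (fun t => Real.exp (2*c*(r-t)) * (-(2*c)) * w t)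
      (fun t => -((2*c*Real.exp (2*c*r)) * (Real.exp (-(2*c*t)) * w t))) (Set.uIcc 0 r) := by
    intro t _
    simp only
    have e1 : 2*c*(r-t) = 2*c*r + -(2*c*t) := by ring
    rw [e1, Real.exp_add]
    ring
  rw [intervalIntegral.integral_congr hptw, intervalIntegral.integral_neg,
    intervalIntegral.integral_const_mul]
  show 1 * w r - -((2*c*Real.exp (2*c*r)) * Re c w r) = _
  ring

lemma contJt (c d : ℝ) {w : ℝ → ℝ} (hw : Continuous w) : Continuous (Jt c d w) := by
  have hP : Continuous (Pe c d w) :=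
    Differentiable.continuous (fun x => (hasDerivAt_Pe c d hw x).differentiableAt)
  have hQ : Continuous (Qe c d w) :=
    Differentiable.continuous (fun x => (hasDerivAt_Qe c d hw x).differentiableAt)
  have he : Continuous (fun r : ℝ => Real.exp (c*r) / d) := by fun_prop
  have hsin : Continuous (fun r : ℝ => Real.sin (d*r)) := by fun_prop
  have hcos : Continuous (fun r : ℝ => Real.cos (d*r)) := by fun_prop
  exact he.mul ((((continuous_const.mul hsin).add (continuous_const.mul hcos)).mul hP).add
    (((continuous_const.mul hsin).sub (continuous_const.mul hcos)).mul hQ))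

lemma primitive_eq (c d : ℝ) (hd : d ≠ 0) (hcd : c^2 + d^2 ≠ 0)
    {w : ℝ → ℝ} (hw : Continuous w) (r : ℝ) :
    (∫ s in (0:ℝ)..r, Real.exp (-(2*c*s)) * Jt c d w s)
      = (1/(c^2+d^2)) * (2*c*Re c w r
        - ((Real.exp (-(c*r)) * ((c^2-d^2)/d * Real.sin (d*r) + 2*c*Real.cos (d*r)))
            * Pe c d w r
          + (Real.exp (-(c*r)) * (2*c*Real.sin (d*r) - (c^2-d^2)/d * Real.cos (d*r)))
            * Qe c d w r)) := by
  set H : ℝ → ℝ := fun x => (1/(c^2+d^2)) * (2*c*Re c w x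
        - ((Real.exp (-(c*x)) * ((c^2-d^2)/d * Real.sin (d*x) + 2*c*Real.cos (d*x)))
            * Pe c d w x
          + (Real.exp (-(c*x)) * (2*c*Real.sin (d*x) - (c^2-d^2)/d * Real.cos (d*x)))
            * Qe c d w x)) with hH
  set F : ℝ → ℝ := fun x => (∫ s in (0:ℝ)..x, Real.exp (-(2*c*s)) * Jt c d w s) - H x with hF
  have hcont : Continuous (fun s => Real.exp (-(2*c*s)) * Jt c d w s) := by
    exact ((Real.continuous_exp.comp (continuous_const.mul continuous_id).neg).mul
      (contJt c d hw))
  have hFderiv : ∀ x, HasDerivAt F 0 x := by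
    intro x
    have hprim := hasDerivAt_primitive hcont x
    have hexp : HasDerivAt (fun y : ℝ => Real.exp (-(c*y))) (Real.exp (-(c*x)) * (-c)) x := by
      have h1 : HasDerivAt (fun y : ℝ => -(c*y)) (-c) x := by
        exact ((hasDerivAt_id x).const_mul c).neg.congr_deriv (by simp)
      exact h1.exp
    have hsin : HasDerivAt (fun y : ℝ => Real.sin (d*y)) (Real.cos (d*x) * d) x := by
      have h1 : HasDerivAt (fun y : ℝ => d*y) d x := by
        simpa using (hasDerivAt_id x).const_mul d
      exact h1.sin
    have hcos : HasDerivAt (fun y : ℝ => Real.cos (d*y)) (-Real.sin (d*x) * d) x := by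
      have h1 : HasDerivAt (fun y : ℝ => d*y) d x := by
        simpa using (hasDerivAt_id x).const_mul d
      exact h1.cos
    have hcoefP := hexp.mul ((hsin.const_mul ((c^2-d^2)/d)).add (hcos.const_mul (2*c)))
    have hcoefQ := hexp.mul ((hsin.const_mul (2*c)).sub (hcos.const_mul ((c^2-d^2)/d)))
    have hPd := hasDerivAt_Pe c d hw x
    have hQd := hasDerivAt_Qe c d hw x
    have hRd := hasDerivAt_Re c hw x
    have hHd := (((hRd.const_mul (2*c)).sub
      ((hcoefP.mul hPd).add (hcoefQ.mul hQd))).const_mul (1/(c^2+d^2)))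
    have := hprim.sub hHd
    refine this.congr_deriv ?_
    symm
    simp only [Pi.add_apply, Pi.sub_apply, Pi.mul_apply]
    rw [Jt]
    have hE2 : Real.exp (-(2*c*x)) = Real.exp (-(c*x))^2 := by
      rw [sq, ← Real.exp_add]; ring_nf
    have hE : Real.exp (c*x) = (Real.exp (-(c*x)))⁻¹ := by
      rw [← Real.exp_neg, neg_neg]
    rw [hE2, hE]
    have hpyth := Real.sin_sq_add_cos_sq (d*x)
    have hX := Real.exp_ne_zero (-(c*x))
    field_simp
    linear_combination (-(2*d*c*Real.exp (-(c*x))^2 * w x)) * Real.sin_sq_add_cos_sq (x*d)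
  have hconst : ∀ x, F x = F 0 := by
    intro x
    exact is_const_of_deriv_eq_zero
      (fun y => (hFderiv y).differentiableAt) (fun y => (hFderiv y).deriv) x 0
  have hF0 : F 0 = 0 := by
    simp [hF, hH, Pe, Qe, Re, intervalIntegral.integral_same]
  have := hconst r
  rw [hF0] at this
  have : (∫ s in (0:ℝ)..r, Real.exp (-(2*c*s)) * Jt c d w s) = H r := by
    simpa [hF, sub_eq_zero] using this
  rw [this, hH]

lemma key_lemma (c d : ℝ) (hd : d ≠ 0) (hcd : c^2 + d^2 ≠ 0)
    {w : ℝ → ℝ} (hw : Continuous w) (hw0 : w 0 = 0) {r : ℝ} (hr : 0 ≤ r) :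
    (∫ s in (0:ℝ)..r, Real.exp (2 * c * (r - s)) * Jp c d w s)
      = (1 / (c ^ 2 + d ^ 2)) *
          (itoInt (fun s => Real.exp (2 * c * (r - s))) w r
            - (c * Jp c d w r + d * Kp c d w r)) := by
  have hcg : Set.EqOn (fun s => Real.exp (2 * c * (r - s)) * Jp c d w s)
      (fun s => Real.exp (2*c*r) * (Real.exp (-(2*c*s)) * Jt c d w s)) (Set.uIcc 0 r) := by
    intro s hs
    rw [Set.uIcc_of_le hr] at hs
    simp only
    rw [Jp_eq c d hw hw0 hs.1, show 2*c*(r-s) = 2*c*r + -(2*c*s) by ring, Real.exp_add,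
      mul_assoc]
  rw [intervalIntegral.integral_congr hcg, intervalIntegral.integral_const_mul,
    primitive_eq c d hd hcd hw r, itoExp_eq c hw hw0 hr, Jp_eq c d hw hw0 hr,
    Kp_eq c d hw hw0 hr, Jt]
  have hE2 : Real.exp (2*c*r) = Real.exp (c*r)^2 := by
    rw [sq, ← Real.exp_add]; ring_nf
  have hE : Real.exp (-(c*r)) = (Real.exp (c*r))⁻¹ := Real.exp_neg _
  rw [hE2, hE]
  have hX := Real.exp_ne_zero (c*r)
  field_simp
  ring

/-- Lemma A.3(c):
`∫₀^r e^{2c(r−s)} J(s) ds = (1/(c²+d²))·(∫₀^r e^{2c(r−s)} dW(s) − (c·J(r) + d·K(r)))`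
almost surely, for every `r ∈ [0,1]`. -/
theorem stmt15 {Ω : Type*} [MeasurableSpace Ω] (P : Measure Ω) [IsProbabilityMeasure P]
    (W : Ω → ℝ → ℝ) (c d : ℝ) (hd : d ≠ 0) (hcd : c ^ 2 + d ^ 2 ≠ 0)
    (hWcont : ∀ ω, Continuous (W ω)) (hW0 : ∀ ω, W ω 0 = 0) :
    ∀ᵐ ω ∂P, ∀ r ∈ Set.Icc (0 : ℝ) 1,
      (∫ s in (0 : ℝ)..r, Real.exp (2 * c * (r - s)) * Jp c d (W ω) s)
        = (1 / (c ^ 2 + d ^ 2)) *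
            (itoInt (fun s => Real.exp (2 * c * (r - s))) (W ω) r
              - (c * Jp c d (W ω) r + d * Kp c d (W ω) r)) := by
  refine ae_of_all _ (fun ω r hr => ?_)
  exact key_lemma c d hd hcd (hWcont ω) (hW0 ω) hr.1
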